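/- arXiv:1812.01047 — 2 statements merged into one kernel-verified Lean document; each statement's English description precedes it below -/
import Mathlib

section
/- Let k ≥ 1 and let G be a graph on n vertices that contains no linear forest with k edges and satisfies d_G(u) + d_G(v) ≤ k−1 for every pair of nonadjacent vertices u, v (i.e., G equals its own k-closure). Then: (i) any two vertices of G of degree at least ⌈k/2⌉ are adjacent, so the set C of such vertices is a clique; (ii) if S is the vertex set of a maximal clique containing C and s = |S|, then s ≤ k and every vertex x ∉ S satisfies d_G(x) ≤ min{ ⌈k/2⌉ − 1, k − s }. -/
/-- A linear forest is a graph all of whose connected components are paths or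
isolated vertices; equivalently, an acyclic graph of maximum degree at most 2. -/
def IsLinearForest {V : Type*} (F : SimpleGraph V) : Prop :=
  F.IsAcyclic ∧ ∀ v : V, (F.neighborSet v).ncard ≤ 2

open SimpleGraph

section Aux

variable {V : Type*} {k : ℕ} {g : ℕ → V}

/-- The path graph on the vertices `g 0, g 1, ..., g k`. -/
private def pathRel (k : ℕ) (g : ℕ → V) : SimpleGraph V :=
  SimpleGraph.fromRel (fun a b => ∃ i, i < k ∧ a = g i ∧ b = g (i + 1))

private lemma pathRel_adj {a b : V} (h : (pathRel k g).Adj a b) :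
    a ≠ b ∧ ∃ i, i < k ∧ ((a = g i ∧ b = g (i + 1)) ∨ (a = g (i + 1) ∧ b = g i)) := by
  rw [pathRel, fromRel_adj] at h
  obtain ⟨hne, h | h⟩ := h
  · obtain ⟨i, hi, h1, h2⟩ := h
    exact ⟨hne, i, hi, Or.inl ⟨h1, h2⟩⟩
  · obtain ⟨i, hi, h1, h2⟩ := h
    exact ⟨hne, i, hi, Or.inr ⟨h2, h1⟩⟩

variable (hg : ∀ i ≤ k, ∀ j ≤ k, g i = g j → i = j)

include hg in
private lemma pathRel_adj_of_idx {j : ℕ} (hj : j ≤ k) {w : V}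
    (h : (pathRel k g).Adj (g j) w) :
    (j < k ∧ w = g (j + 1)) ∨ (0 < j ∧ w = g (j - 1)) := by
  obtain ⟨-, i, hi, h | h⟩ := pathRel_adj h
  · have : i = j := hg i (le_of_lt hi) j hj h.1.symm
    exact Or.inl ⟨this ▸ hi, by rw [h.2, this]⟩
  · have : i + 1 = j := hg (i + 1) hi j hj h.1.symm
    exact Or.inr ⟨by omega, by rw [h.2]; congr 1; omega⟩

include hg in
/-- If `g j` has two distinct `pathRel` neighbors, one of them is `g (j+1)`. -/
private lemma pathRel_two_nbrs {j : ℕ} (hj : j ≤ k) {w w' : V} (hww : w ≠ w')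
    (h : (pathRel k g).Adj (g j) w) (h' : (pathRel k g).Adj (g j) w') :
    j < k ∧ (w = g (j + 1) ∨ w' = g (j + 1)) := by
  rcases pathRel_adj_of_idx hg hj h with ⟨h1, h2⟩ | ⟨h1, h2⟩ <;>
    rcases pathRel_adj_of_idx hg hj h' with ⟨h1', h2'⟩ | ⟨h1', h2'⟩
  · exact ⟨h1, Or.inl h2⟩
  · exact ⟨h1, Or.inl h2⟩
  · exact ⟨h1', Or.inr h2'⟩
  · exact absurd (h2.trans h2'.symm) hww

private lemma last_edge {F : SimpleGraph V} :
    ∀ {a b : V} (p : F.Walk a b), 0 < p.length →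
      ∃ w', F.Adj w' b ∧ w' ∈ p.support ∧ s(w', b) ∈ p.edges := by
  classical
  intro a b p
  induction p with
  | nil => simp
  | cons h q ih =>
    intro _
    by_cases hq : 0 < q.length
    · obtain ⟨w', h1, h2, h3⟩ := ih hq
      exact ⟨w', h1, by simp [h2], by simp [h3]⟩
    · clear ih
      cases q with
      | nil => exact ⟨_, h, by simp, by simp⟩
      | cons h' q' => simp at hq

include hg in
private lemma pathRel_isAcyclic : (pathRel k g).IsAcyclic := by
  classical
  intro v c hc
  -- first, v is in the image of g with index ≤ k
  cases c with
  | nil => exact hc.ne_nil rfl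
  | cons h p =>
    have hv : ∃ i ≤ k, v = g i := by
      obtain ⟨-, i, hi, hcase | hcase⟩ := pathRel_adj h
      · exact ⟨i, le_of_lt hi, hcase.1⟩
      · exact ⟨i + 1, hi, hcase.1⟩
    obtain ⟨i0, hi0, rfl⟩ := hv
    set c : (pathRel k g).Walk (g i0) (g i0) := SimpleGraph.Walk.cons h p with hcdef
    -- indices of vertices in the tail of the support
    set I : Finset ℕ :=
      (Finset.range (k + 1)).filter (fun i => g i ∈ c.support.tail) with hIdef
    have hIne : I.Nonempty := by
      refine ⟨i0, ?_⟩
      rw [hIdef, Finset.mem_filter, Finset.mem_range]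
      refine ⟨by omega, ?_⟩
      rw [hcdef]
      simp only [hcdef, SimpleGraph.Walk.support_cons, List.tail_cons]
      exact p.end_mem_support
    set j := I.max' hIne with hjdef
    have hjmem : j ∈ I := I.max'_mem hIne
    rw [hIdef, Finset.mem_filter, Finset.mem_range] at hjmem
    obtain ⟨hjk, hjsupp⟩ := hjmem
    have hjk : j ≤ k := by omega
    have hjsupp' : g j ∈ c.support := by
      rw [c.support_eq_cons]; exact List.mem_cons_of_mem _ hjsupp
    -- rotate the cycle to start at g j
    set c' := c.rotate (g j) hjsupp' with hc'def
    have hc' : c'.IsCycle := hc.rotate hjsupp'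
    have hrot := c.support_rotate (g j) hjsupp'
    cases hcc : c' with
    | nil => exact hc'.ne_nil hcc
    | cons h2 p2 =>
      rename_i w
      rw [hcc] at hc'
      have hlen : 3 ≤ p2.length + 1 := by
        have := hc'.three_le_length
        simpa using this
      obtain ⟨w', hadj', hw'supp, hw'edge⟩ := last_edge p2 (by omega)
      rw [SimpleGraph.Walk.cons_isCycle_iff] at hc'
      have hww : w ≠ w' := by
        rintro rfl
        exact hc'.2 (by rwa [Sym2.eq_swap] at hw'edge)
      obtain ⟨hjk', hcases⟩ := pathRel_two_nbrs hg hjk hww h2 hadj'.symm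
      -- g (j+1) is in the tail support of c', hence of c
      have hmem : g (j + 1) ∈ c'.support.tail := by
        rw [hcc]
        simp only [SimpleGraph.Walk.support_cons, List.tail_cons]
        rcases hcases with rfl | rfl
        · exact p2.start_mem_support
        · exact hw'supp
      have : g (j + 1) ∈ c.support.tail := hrot.mem_iff.mp hmem
      have : j + 1 ∈ I := by
        rw [hIdef, Finset.mem_filter, Finset.mem_range]
        exact ⟨by omega, this⟩
      have := I.le_max' _ this
      omega

include hg in
private lemma pathRel_nbr_le : ∀ v : V, ((pathRel k g).neighborSet v).ncard ≤ 2 := by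
  intro v
  have key : ∃ a b : V, (pathRel k g).neighborSet v ⊆ {a, b} := by
    by_cases hv : ∃ j ≤ k, v = g j
    · obtain ⟨j, hj, rfl⟩ := hv
      refine ⟨g (j + 1), g (j - 1), ?_⟩
      intro w hw
      rcases pathRel_adj_of_idx hg hj hw with ⟨-, rfl⟩ | ⟨-, rfl⟩
      · exact Set.mem_insert _ _
      · exact Set.mem_insert_of_mem _ rfl
    · refine ⟨v, v, ?_⟩
      intro w hw
      exfalso
      apply hv
      obtain ⟨-, i, hi, hcase | hcase⟩ := pathRel_adj hw
      · exact ⟨i, le_of_lt hi, hcase.1⟩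
      · exact ⟨i + 1, hi, hcase.1⟩
  obtain ⟨a, b, hsub⟩ := key
  calc ((pathRel k g).neighborSet v).ncard ≤ ({a, b} : Set V).ncard :=
        Set.ncard_le_ncard hsub (Set.toFinite _)
    _ ≤ 2 := by
        have h1 := Set.ncard_insert_le a ({b} : Set V)
        simpa using h1

include hg in
private lemma pathRel_edge_card : (pathRel k g).edgeSet.ncard = k := by
  classical
  have hedge : (pathRel k g).edgeSet =
      ↑((Finset.range k).image (fun i => s(g i, g (i + 1)))) := by
    ext e
    induction e with
    | _ a b =>
      simp only [SimpleGraph.mem_edgeSet, Finset.coe_image, Finset.coe_range, Set.mem_image,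
        Set.mem_Iio]
      constructor
      · intro h
        obtain ⟨hne, i, hi, hcase | hcase⟩ := pathRel_adj h
        · exact ⟨i, hi, by rw [hcase.1, hcase.2]⟩
        · exact ⟨i, hi, by rw [hcase.1, hcase.2, Sym2.eq_swap]⟩
      · rintro ⟨i, hi, he⟩
        have hne : g i ≠ g (i + 1) := by
          intro hcon
          have := hg i (by omega) (i + 1) (by omega) hcon
          omega
        rw [Sym2.eq_iff] at he
        rw [pathRel, fromRel_adj]
        rcases he with ⟨h1, h2⟩ | ⟨h1, h2⟩
        · exact ⟨h1 ▸ h2 ▸ hne, Or.inl ⟨i, hi, h1.symm, h2.symm⟩⟩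
        · exact ⟨h1 ▸ h2 ▸ hne.symm, Or.inr ⟨i, hi, h1.symm, h2.symm⟩⟩
  rw [hedge, Set.ncard_coe_finset]
  rw [Finset.card_image_of_injOn, Finset.card_range]
  intro i hi j hj hij
  simp only [Finset.mem_coe, Finset.mem_range] at hi hj
  rw [Sym2.eq_iff] at hij
  rcases hij with ⟨h1, -⟩ | ⟨h1, h2⟩
  · exact hg i (by omega) j (by omega) h1
  · have e1 := hg i (by omega) (j + 1) (by omega) h1
    have e2 := hg (i + 1) (by omega) j (by omega) h2
    omega

/-- A clique with at least `k+1` vertices contains a linear forest with `k` edges. -/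
private lemma clique_linear_forest {n k : ℕ} (G : SimpleGraph (Fin n)) (S : Set (Fin n))
    (hS : G.IsClique S) (hcard : k + 1 ≤ S.ncard) :
    ∃ F : SimpleGraph (Fin n), F ≤ G ∧ IsLinearForest F ∧ F.edgeSet.ncard = k := by
  obtain ⟨t, htS, htcard⟩ := Set.exists_subset_card_eq hcard
  have htfin : t.Finite := Set.toFinite t
  have htc : htfin.toFinset.card = k + 1 := by
    rw [← Set.ncard_eq_toFinset_card t htfin, htcard]
  set e := htfin.toFinset.orderIsoOfFin htc with hedef
  set g : ℕ → Fin n := fun i => (e ⟨min i k, by omega⟩ : Fin n) with hgdef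
  have hgS : ∀ i, g i ∈ S := by
    intro i
    apply htS
    have := (e ⟨min i k, by omega⟩).2
    rwa [Set.Finite.mem_toFinset] at this
  have hg : ∀ i ≤ k, ∀ j ≤ k, g i = g j → i = j := by
    intro i hi j hj hij
    rw [hgdef] at hij
    simp only at hij
    have := e.injective (Subtype.ext hij)
    have := Fin.mk.inj_iff.mp this
    omega
  refine ⟨pathRel k g, ?_, ⟨pathRel_isAcyclic hg, pathRel_nbr_le hg⟩, pathRel_edge_card hg⟩
  intro a b hab
  obtain ⟨hne, i, hi, hcase | hcase⟩ := pathRel_adj hab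
  · exact hS (hcase.1 ▸ hgS i) (hcase.2 ▸ hgS (i + 1)) hne
  · exact hS (hcase.1 ▸ hgS (i + 1)) (hcase.2 ▸ hgS i) hne

end Aux

theorem stmt_13 (n k : ℕ) (hk : 1 ≤ k) (G : SimpleGraph (Fin n))
    (hfree : ¬ ∃ F : SimpleGraph (Fin n), F ≤ G ∧ IsLinearForest F ∧ F.edgeSet.ncard = k)
    (hclosed : ∀ u v : Fin n, u ≠ v → ¬ G.Adj u v →
      (G.neighborSet u).ncard + (G.neighborSet v).ncard ≤ k - 1) :
    (∀ u v : Fin n, u ≠ v → (k + 1) / 2 ≤ (G.neighborSet u).ncard →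
        (k + 1) / 2 ≤ (G.neighborSet v).ncard → G.Adj u v) ∧
    G.IsClique {v : Fin n | (k + 1) / 2 ≤ (G.neighborSet v).ncard} ∧
    (∀ S : Set (Fin n), G.IsClique S →
      (∀ T : Set (Fin n), G.IsClique T → S ⊆ T → T = S) →
      {v : Fin n | (k + 1) / 2 ≤ (G.neighborSet v).ncard} ⊆ S →
      S.ncard ≤ k ∧
        ∀ x : Fin n, x ∉ S →
          (G.neighborSet x).ncard ≤ min ((k + 1) / 2 - 1) (k - S.ncard)) := by
  have part1 : ∀ u v : Fin n, u ≠ v → (k + 1) / 2 ≤ (G.neighborSet u).ncard →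
      (k + 1) / 2 ≤ (G.neighborSet v).ncard → G.Adj u v := by
    intro u v hne hu hv
    by_contra hadj
    have := hclosed u v hne hadj
    omega
  refine ⟨part1, ?_, ?_⟩
  · intro u hu v hv hne
    exact part1 u v hne hu hv
  · intro S hScl hSmax hCsub
    have hsk : S.ncard ≤ k := by
      by_contra hcon
      push_neg at hcon
      exact hfree (clique_linear_forest G S hScl (by omega))
    refine ⟨hsk, ?_⟩
    intro x hx
    -- there is a vertex of S not adjacent to x
    have hy : ∃ y ∈ S, ¬ G.Adj x y := by
      by_contra hcon
      push_neg at hcon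
      have hT : G.IsClique (insert x S) := by
        apply hScl.insert
        intro b hb hne
        exact hcon b hb
      have := hSmax (insert x S) hT (Set.subset_insert x S)
      rw [← this] at hx
      exact hx (Set.mem_insert x S)
    obtain ⟨y, hyS, hxy⟩ := hy
    have hxyne : x ≠ y := fun h => hx (h ▸ hyS)
    have hdy : S.ncard - 1 ≤ (G.neighborSet y).ncard := by
      have hsub : S \ {y} ⊆ G.neighborSet y := by
        intro z hz
        show G.Adj y z
        exact hScl hyS hz.1 (fun h => hz.2 (Set.mem_singleton_iff.mpr h.symm))
      calc S.ncard - 1 = (S \ {y}).ncard := (Set.ncard_diff_singleton_of_mem hyS).symm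
        _ ≤ (G.neighborSet y).ncard := Set.ncard_le_ncard hsub (Set.toFinite _)
    have hsum := hclosed x y hxyne hxy
    have hxC : ¬ ((k + 1) / 2 ≤ (G.neighborSet x).ncard) := by
      intro h
      exact hx (hCsub h)
    -- S nonempty since y ∈ S
    have hS1 : 1 ≤ S.ncard := (Set.ncard_pos (Set.toFinite S)).mpr ⟨y, hyS⟩
    omega
end

section
/- Let k ≥ 0 and let G be a graph on n vertices with matching number ν(G) ≤ k satisfying d_G(u) + d_G(v) ≤ 2k for every pair of nonadjacent vertices u, v (i.e., G equals its own (2k+1)-closure). Then: (i) any two vertices of G of degree at least k+1 are adjacent, so the set C of such vertices is a clique; (ii) if S is the vertex set of a maximal clique containing C and s = |S|, then s ≤ 2k+1 and every vertex x ∉ S satisfies d_G(x) ≤ min{ k, 2k − s + 1 }. -/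
theorem stmt_14 (n k : ℕ) (G : SimpleGraph (Fin n))
    (hnu : ∀ M : G.Subgraph, M.IsMatching → M.edgeSet.ncard ≤ k)
    (hclosed : ∀ u v : Fin n, u ≠ v → ¬ G.Adj u v →
      (G.neighborSet u).ncard + (G.neighborSet v).ncard ≤ 2 * k) :
    (∀ u v : Fin n, u ≠ v → k + 1 ≤ (G.neighborSet u).ncard →
        k + 1 ≤ (G.neighborSet v).ncard → G.Adj u v) ∧
    G.IsClique {v : Fin n | k + 1 ≤ (G.neighborSet v).ncard} ∧
    (∀ S : Set (Fin n), G.IsClique S →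
      (∀ T : Set (Fin n), G.IsClique T → S ⊆ T → T = S) →
      {v : Fin n | k + 1 ≤ (G.neighborSet v).ncard} ⊆ S →
      S.ncard ≤ 2 * k + 1 ∧
        ∀ x : Fin n, x ∉ S →
          (G.neighborSet x).ncard ≤ min k (2 * k + 1 - S.ncard)) := by
  classical
  have part1 : ∀ u v : Fin n, u ≠ v → k + 1 ≤ (G.neighborSet u).ncard →
      k + 1 ≤ (G.neighborSet v).ncard → G.Adj u v := by
    intro u v huv hu hv
    by_contra hadj
    have := hclosed u v huv hadj
    omega
  refine ⟨part1, fun u hu v hv huv => part1 u v huv hu hv, ?_⟩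
  intro S hS hmax hCS
  have hSfin : S.Finite := Set.toFinite S
  have hcard : S.ncard ≤ 2 * k + 1 := by
    by_contra hbig
    push_neg at hbig
    -- extract 2k+2 distinct vertices of S
    have hle : 2 * k + 2 ≤ hSfin.toFinset.card := by
      rw [← Set.ncard_eq_toFinset_card S hSfin]; omega
    obtain ⟨t, hts, htc⟩ := Finset.exists_subset_card_eq hle
    have hmul : (k + 1) * 2 = t.card := by omega
    set f : Fin (k + 1) × Fin 2 → Fin n :=
      fun p => (t.equivFin.symm (Fin.cast hmul (finProdFinEquiv p)) : Fin n) with hfdef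
    have hf : Function.Injective f := by
      intro p q hpq
      have := Subtype.val_injective hpq
      have := t.equivFin.symm.injective this
      have := Fin.cast_injective hmul this
      exact finProdFinEquiv.injective this
    have hfS : ∀ p, f p ∈ S := by
      intro p
      have : (f p) ∈ t := (t.equivFin.symm (Fin.cast hmul (finProdFinEquiv p))).2
      exact hSfin.mem_toFinset.mp (hts this)
    have hne01 : ∀ i : Fin (k+1), f (i, 0) ≠ f (i, 1) := by
      intro i h
      have := hf h
      simp at this
    set M : G.Subgraph :=
      { verts := Set.range f
        Adj := fun a b => ∃ i : Fin (k + 1),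
          (a = f (i, 0) ∧ b = f (i, 1)) ∨ (a = f (i, 1) ∧ b = f (i, 0))
        adj_sub := by
          rintro a b ⟨i, ⟨rfl, rfl⟩ | ⟨rfl, rfl⟩⟩
          · exact hS (hfS _) (hfS _) (hne01 i)
          · exact (hS (hfS _) (hfS _) (hne01 i)).symm
        edge_vert := by
          rintro a b ⟨i, ⟨rfl, -⟩ | ⟨rfl, -⟩⟩ <;> exact ⟨_, rfl⟩
        symm := by
          constructor
          rintro a b ⟨i, h | h⟩
          · exact ⟨i, Or.inr ⟨h.2, h.1⟩⟩
          · exact ⟨i, Or.inl ⟨h.2, h.1⟩⟩ } with hMdef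
    have hmatch : M.IsMatching := by
      rintro v ⟨⟨i, ε⟩, rfl⟩
      fin_cases ε
      · refine ⟨f (i, 1), ⟨i, Or.inl ⟨rfl, rfl⟩⟩, ?_⟩
        rintro w ⟨j, ⟨h1, rfl⟩ | ⟨h1, rfl⟩⟩
        · have := hf h1
          simp only [Prod.mk.injEq] at this
          rw [this.1]
        · have := hf h1
          simp at this
      · refine ⟨f (i, 0), ⟨i, Or.inr ⟨rfl, rfl⟩⟩, ?_⟩
        rintro w ⟨j, ⟨h1, rfl⟩ | ⟨h1, rfl⟩⟩
        · have := hf h1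
          simp at this
        · have := hf h1
          simp only [Prod.mk.injEq] at this
          rw [this.1]
    set E : Fin (k + 1) → Sym2 (Fin n) := fun i => s(f (i, 0), f (i, 1)) with hEdef
    have hE : Function.Injective E := by
      intro i j hij
      rw [hEdef, Sym2.eq_iff] at hij
      rcases hij with ⟨h1, -⟩ | ⟨h1, -⟩
      · have := hf h1
        simp only [Prod.mk.injEq] at this
        exact this.1.symm ▸ rfl
      · have := hf h1
        simp at this
    have hEsub : Set.range E ⊆ M.edgeSet := by
      rintro e ⟨i, rfl⟩
      exact ⟨i, Or.inl ⟨rfl, rfl⟩⟩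
    have hcount : k + 1 ≤ M.edgeSet.ncard := by
      have h1 : (Set.range E).ncard = k + 1 := by
        rw [← Set.image_univ, Set.ncard_image_of_injective _ hE, Set.ncard_univ]
        simp
      rw [← h1]
      exact Set.ncard_le_ncard hEsub (Set.toFinite _)
    have := hnu M hmatch
    omega
  refine ⟨hcard, ?_⟩
  intro x hx
  have hxk : (G.neighborSet x).ncard ≤ k := by
    by_contra h
    push_neg at h
    exact hx (hCS h)
  obtain ⟨y, hyS, hxy⟩ : ∃ y ∈ S, ¬ G.Adj x y := by
    by_contra h
    push_neg at h
    have hclq : G.IsClique (insert x S) :=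
      hS.insert fun b hb _ => h b hb
    have := hmax _ hclq (Set.subset_insert _ _)
    exact hx (this ▸ Set.mem_insert x S)
  have hxyne : x ≠ y := fun h => hx (h ▸ hyS)
  have hdy : S.ncard - 1 ≤ (G.neighborSet y).ncard := by
    have hsub : S \ {y} ⊆ G.neighborSet y := by
      intro z hz
      exact (hS hz.1 hyS hz.2).symm
    calc S.ncard - 1 = (S \ {y}).ncard :=
          (Set.ncard_diff_singleton_of_mem hyS).symm
      _ ≤ _ := Set.ncard_le_ncard hsub (Set.toFinite _)
  have := hclosed x y hxyne hxy
  have hy1 : 1 ≤ S.ncard := (Set.ncard_pos hSfin).mpr ⟨y, hyS⟩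
  exact le_min hxk (by omega)
end
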